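/- In a Schottky configuration, the group G generated by g₁, …, g_m is a discrete subgroup of SO⁰(2,1): there exists a neighborhood of the identity in SO⁰(2,1) whose intersection with G is {1}; equivalently, no sequence of pairwise distinct elements of G converges to the identity. -/

import Mathlib

noncomputable section

open Set

/-- The underlying vector space ℝ^{2,1} of Minkowski (2+1)-space `E`. -/
abbrev V : Type := Fin 3 → ℝ

/-- The Lorentzian inner product `B` of signature (2,1). -/
def mB (u v : V) : ℝ := u 0 * v 0 + u 1 * v 1 - u 2 * v 2

def Timelike (v : V) : Prop := mB v v < 0

def UnitSpacelike (v : V) : Prop := mB v v = 1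

/-- future-pointing timelike vector. -/
def FutureTimelike (v : V) : Prop := mB v v < 0 ∧ 0 < v 2

/-- The standard Euclidean norm on ℝ³. -/
def eunorm (v : V) : ℝ := Real.sqrt (v 0 ^ 2 + v 1 ^ 2 + v 2 ^ 2)

/-- The Euclidean distance ρ. -/
def ρ (p q : V) : ℝ := eunorm (p - q)

/-- Open Euclidean ball `B(x,δ)`. -/
def eball (x : V) (δ : ℝ) : Set V := {y | ρ x y < δ}

/-- Euclidean δ-neighborhood `B(S,δ)` of a set `S`. -/
def nbhd (S : Set V) (δ : ℝ) : Set V := {y | ∃ x ∈ S, ρ x y < δ}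

/-- Membership in SO⁰(2,1): a linear isometry of `B` preserving orientation
(det = 1) and time-orientation (the future cone); this characterizes the
identity component of the group of linear isometries of `B`. -/
def InSO (g : V ≃ₗ[ℝ] V) : Prop :=
  (∀ u v : V, mB (g u) (g v) = mB u v) ∧
  LinearMap.det g.toLinearMap = 1 ∧
  ∀ v : V, FutureTimelike v → FutureTimelike (g v)

/-- Membership in Isom⁰(E) = SO⁰(2,1) ⋉ ℝ³. -/
def InIsom (φ : V ≃ᵃ[ℝ] V) : Prop := InSO φ.linear

/-- The point `u_φ = (cos φ, sin φ, 1)` on the circle S¹ of future-pointing null vectors. -/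
def uph (φ : ℝ) : V := ![Real.cos φ, Real.sin φ, 1]

/-- The circle S¹ of future-pointing null vectors. -/
def circ : Set V := {u | ∃ φ : ℝ, u = uph φ}

/-- An interval (arc) `{u_φ : φ₁ < φ < φ₂}` on S¹. -/
def arc (φ₁ φ₂ : ℝ) : Set V := {u | ∃ φ : ℝ, φ₁ < φ ∧ φ < φ₂ ∧ u = uph φ}

/-- Radial projection of a future-pointing null vector back onto S¹ (divide by third
coordinate); `u ↦ nproj (g u)` is the induced action `P(g)` of `g` on S¹. -/
def nproj (w : V) : V := (w 2)⁻¹ • w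

/-- `(a,b,c)` is a positively oriented basis of ℝ³. -/
def PosOriented (a b c : V) : Prop := 0 < Matrix.det (Matrix.of ![a, b, c])

/-- `xm = x⁻(v)`, `xp = x⁺(v)`: the two points of S¹ which are B-orthogonal to the
unit-spacelike vector `v`, labeled so that `(x⁻(v), x⁺(v), v)` is positively oriented. -/
def IsNullFrame (v xm xp : V) : Prop :=
  xm ∈ circ ∧ xp ∈ circ ∧ mB xm v = 0 ∧ mB xp v = 0 ∧ xm ≠ xp ∧ PosOriented xm xp v

/-- Eigendata of a hyperbolic element of SO⁰(2,1): `xm = x⁻(g)` and `xp = x⁺(g)` are the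
eigenvectors on S¹ with eigenvalues `lam < 1 < lam⁻¹`. -/
def IsHypData (g : V ≃ₗ[ℝ] V) (lam : ℝ) (xm xp : V) : Prop :=
  0 < lam ∧ lam < 1 ∧ xm ∈ circ ∧ xp ∈ circ ∧ g xm = lam • xm ∧ g xp = lam⁻¹ • xp

/-- `g` is hyperbolic: it has eigenvalues `lam < 1 < lam⁻¹` with null eigenvectors on S¹. -/
def IsHyperbolic (g : V ≃ₗ[ℝ] V) : Prop := ∃ lam xm xp, IsHypData g lam xm xp

/-- `g` is ε-hyperbolic: it is hyperbolic and `ρ(x⁺(g), x⁻(g)) ≥ ε`. -/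
def EpsHyperbolic (g : V ≃ₗ[ℝ] V) (ε : ℝ) : Prop :=
  ∃ lam xm xp, IsHypData g lam xm xp ∧ ε ≤ ρ xp xm

/-- Hyperbolic 2-space H² (hyperboloid model: the set of future unit timelike vectors,
the canonical section of the set of timelike lines). -/
def Hyp : Set V := {v | mB v v = -1 ∧ 0 < v 2}

/-- The origin `O ∈ H²`. -/
def Opt : V := ![0, 0, 1]

/-- Hyperbolic distance on H² (arcosh of |B(x,y)| for normalized x, y). -/
def hdist (x y : V) : ℝ := Real.log (|mB x y| + Real.sqrt (mB x y ^ 2 - 1))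

/-- The half-plane `H_v ⊂ H²` determined by a unit-spacelike vector `v`. -/
def halfPlane (v : V) : Set V := {u | u ∈ Hyp ∧ 0 < mB u v}

/-- The geodesic `l_v ⊂ H²` determined by a unit-spacelike vector `v`. -/
def geo (v : V) : Set V := {u | u ∈ Hyp ∧ mB u v = 0}

/-- The crooked plane `C₀` with vertex the origin directed by `e₁ = (1,0,0)`. -/
def C0 : Set V :=
  {u | u 0 = 0 ∧ |u 1| ≤ |u 2|} ∪
  {u | u 0 ≤ 0 ∧ u 1 = u 2} ∪
  {u | 0 ≤ u 0 ∧ u 1 = -u 2}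

/-- The open crooked half-space `H₀` bounded by `C₀`. -/
def H0 : Set V :=
  {u | 0 < u 0 ∧ 0 < u 1 + u 2} ∪
  {u | u 0 = 0 ∧ 0 < u 1 + u 2 ∧ 0 < u 2 - u 1} ∪
  {u | u 0 < 0 ∧ 0 < u 2 - u 1}

/-- `S` is a crooked plane `C(u,p) = p + g(C₀)` for some `g ∈ SO⁰(2,1)`. -/
def IsCrookedPlane (S : Set V) : Prop :=
  ∃ (g : V ≃ₗ[ℝ] V) (p : V), InSO g ∧ S = (fun x => p + g x) '' C0

/-- `H` is a crooked half-space `H(u,p) = p + g(H₀)` for some `g ∈ SO⁰(2,1)`. -/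
def IsCrookedHalfSpace (H : Set V) : Prop :=
  ∃ (g : V ≃ₗ[ℝ] V) (p : V), InSO g ∧ H = (fun x => p + g x) '' H0

/-- Signed generator: `g^+ = g`, `g^- = g⁻¹` (Bool `true` = `+`, `false` = `−`). -/
def sgen {G : Type*} [Group G] (g : G) (j : Bool) : G := if j then g else g⁻¹

/-- A word `w 0, …, w l` in the letters `(i,j)` (meaning `h_i^j`) is reduced:
`(i_{k+1}, j_{k+1}) ≠ (i_k, −j_k)` for all `k < l`. -/
def ReducedWord {m : ℕ} (l : ℕ) (w : ℕ → Fin m × Bool) : Prop :=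
  ∀ k, k < l → ¬((w (k + 1)).1 = (w k).1 ∧ (w (k + 1)).2 = !(w k).2)

/-- An affine Schottky configuration. -/
structure AffSchottky (m : ℕ) where
  hm : 2 ≤ m
  h : Fin m → V ≃ᵃ[ℝ] V
  hIsom : ∀ i, InIsom (h i)
  H : Fin m → Bool → Set V
  hCrooked : ∀ i j, IsCrookedHalfSpace (H i j)
  hDisj : ∀ i j i' j', (i, j) ≠ (i', j') → Disjoint (H i j) (H i' j')
  hPair : ∀ i, ⇑(h i) '' H i false = (closure (H i true))ᶜ

namespace AffSchottky

variable {m : ℕ} (S : AffSchottky m)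

/-- The crooked polyhedron `X = E − ⋃ closure(H_i^j)`. -/
def X : Set V := (⋃ i, ⋃ j, closure (S.H i j))ᶜ

/-- The affine Schottky group Γ generated by `h₁, …, h_m`. -/
def Γ : Subgroup (V ≃ᵃ[ℝ] V) := Subgroup.closure (Set.range S.h)

/-- The signed generators `h_i^j`. -/
def hp (i : Fin m) (j : Bool) : V ≃ᵃ[ℝ] V := sgen (S.h i) j

/-- `wprod w k = h_{i₀}^{j₀} ⋯ h_{i_{k-1}}^{j_{k-1}}` where `w t = (i_t, j_t)`. -/
def wprod (w : ℕ → Fin m × Bool) (k : ℕ) : V ≃ᵃ[ℝ] V :=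
  ((List.range k).map fun t => S.hp (w t).1 (w t).2).prod

end AffSchottky

/-- A (linear) Schottky configuration. -/
structure LinSchottky (m : ℕ) where
  hm : 2 ≤ m
  g : Fin m → V ≃ₗ[ℝ] V
  hSO : ∀ i, InSO (g i)
  a : Fin m → Bool → ℝ
  b : Fin m → Bool → ℝ
  hab : ∀ i j, a i j < b i j ∧ b i j - a i j < 2 * Real.pi
  hDisjCl : ∀ i j i' j', (i, j) ≠ (i', j') →
    Disjoint (closure (arc (a i j) (b i j))) (closure (arc (a i' j') (b i' j')))
  hPair : ∀ i, (fun u => nproj (g i u)) '' arc (a i false) (b i false) =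
    circ \ closure (arc (a i true) (b i true))
  hPairInv : ∀ i, (fun u => nproj ((g i)⁻¹ u)) '' arc (a i true) (b i true) =
    circ \ closure (arc (a i false) (b i false))

namespace LinSchottky

variable {m : ℕ} (S : LinSchottky m)

/-- The intervals `A_i^j ⊂ S¹`. -/
def A (i : Fin m) (j : Bool) : Set V := arc (S.a i j) (S.b i j)

/-- The Schottky group `G` generated by `g₁, …, g_m`. -/
def G : Subgroup (V ≃ₗ[ℝ] V) := Subgroup.closure (Set.range S.g)

/-- The signed generators `g_i^j`. -/
def gp (i : Fin m) (j : Bool) : V ≃ₗ[ℝ] V := sgen (S.g i) j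

/-- `wprod w k = g_{i₀}^{j₀} ⋯ g_{i_{k-1}}^{j_{k-1}}` where `w t = (i_t, j_t)`. -/
def wprod (w : ℕ → Fin m × Bool) (k : ℕ) : V ≃ₗ[ℝ] V :=
  ((List.range k).map fun t => S.gp (w t).1 (w t).2).prod

end LinSchottky

/-- Given directing unit-spacelike vectors `v i j` of the half-planes `H_i^j`, the
fundamental polygon `Δ = H² − ⋃ closure(H_i^j)` (closures taken in H²). -/
def linΔ {m : ℕ} (v : Fin m → Bool → V) : Set V :=
  Hyp \ ⋃ i, ⋃ j, Hyp ∩ closure (halfPlane (v i j))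

namespace Stmt9Aux

lemma uph2 (φ : ℝ) : uph φ 2 = 1 := rfl
lemma uph0 (φ : ℝ) : uph φ 0 = Real.cos φ := rfl
lemma uph1 (φ : ℝ) : uph φ 1 = Real.sin φ := rfl

lemma circ_two {u : V} (hu : u ∈ circ) : u 2 = 1 := by
  obtain ⟨φ, rfl⟩ := hu; rfl

lemma mB_circ {u : V} (hu : u ∈ circ) : mB u u = 0 := by
  obtain ⟨φ, rfl⟩ := hu
  simp only [mB, uph0, uph1, uph2]
  nlinarith [Real.sin_sq_add_cos_sq φ]

lemma circ_abs_le {u : V} (hu : u ∈ circ) (i : Fin 3) : |u i| ≤ 1 := by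
  obtain ⟨φ, rfl⟩ := hu
  fin_cases i
  · exact abs_le.2 ⟨Real.neg_one_le_cos φ, Real.cos_le_one φ⟩
  · exact abs_le.2 ⟨Real.neg_one_le_sin φ, Real.sin_le_one φ⟩
  · show |(1 : ℝ)| ≤ 1
    norm_num

lemma nproj_circ {u : V} (hu : u ∈ circ) : nproj u = u := by
  rw [nproj, circ_two hu]; simp

lemma arc_subset_circ (a b : ℝ) : arc a b ⊆ circ := by
  rintro u ⟨φ, _, _, rfl⟩; exact ⟨φ, rfl⟩

lemma arc_nonempty {a b : ℝ} (h : a < b) : (uph ((a + b) / 2)) ∈ arc a b :=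
  ⟨(a + b) / 2, by linarith, by linarith, rfl⟩

/-- Preserves the bilinear form. -/
def PB (γ : V ≃ₗ[ℝ] V) : Prop := ∀ u v : V, mB (γ u) (γ v) = mB u v

lemma PB_one : PB 1 := fun _ _ => rfl

lemma PB_mul {γ η : V ≃ₗ[ℝ] V} (hγ : PB γ) (hη : PB η) : PB (γ * η) := by
  intro u v; exact (hγ _ _).trans (hη _ _)

lemma PB_inv {γ : V ≃ₗ[ℝ] V} (hγ : PB γ) : PB γ⁻¹ := by
  intro u v
  have := hγ (γ⁻¹ u) (γ⁻¹ v)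
  rw [show γ (γ⁻¹ u) = u from γ.apply_symm_apply u,
    show γ (γ⁻¹ v) = v from γ.apply_symm_apply v] at this
  exact this.symm

lemma two_ne {γ : V ≃ₗ[ℝ] V} (hγ : PB γ) {u : V} (hu : u ∈ circ) : (γ u) 2 ≠ 0 := by
  intro h0
  have hB : mB (γ u) (γ u) = 0 := by rw [hγ]; exact mB_circ hu
  have h01 : γ u 0 = 0 ∧ γ u 1 = 0 := by
    constructor <;> nlinarith [sq_nonneg (γ u 0), sq_nonneg (γ u 1), (show mB (γ u) (γ u) = γ u 0 * γ u 0 + γ u 1 * γ u 1 - γ u 2 * γ u 2 from rfl)]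
  have : γ u = 0 := by
    funext i; fin_cases i
    · exact h01.1
    · exact h01.2
    · exact h0
  have hu0 : u = 0 := by
    have := congrArg γ.symm this
    simpa using this
  have := circ_two hu
  rw [hu0] at this
  simpa using this

lemma nproj_smul {c : ℝ} (hc : c ≠ 0) (v : V) : nproj (c • v) = nproj v := by
  have h2 : (c • v) 2 = c * v 2 := rfl
  unfold nproj
  rw [h2, smul_smul, mul_inv, mul_comm c⁻¹ (v 2)⁻¹, mul_assoc, inv_mul_cancel₀ hc, mul_one]

lemma nproj_comp (γ : V ≃ₗ[ℝ] V) {η : V ≃ₗ[ℝ] V} (hη : PB η) {u : V} (hu : u ∈ circ) :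
    nproj ((γ * η) u) = nproj (γ (nproj (η u))) := by
  have h2 : (η u) 2 ≠ 0 := two_ne hη hu
  have : γ (nproj (η u)) = ((η u) 2)⁻¹ • γ (η u) := by
    rw [nproj, map_smul]
  rw [this, nproj_smul (inv_ne_zero h2)]
  rfl

lemma cancel {g : V ≃ₗ[ℝ] V} (hg : PB g⁻¹) {u : V} (hu : u ∈ circ) :
    nproj (g (nproj (g⁻¹ u))) = u := by
  have h2 : (g⁻¹ u) 2 ≠ 0 := two_ne hg hu
  have hmap : g (nproj (g⁻¹ u)) = ((g⁻¹ u) 2)⁻¹ • g (g⁻¹ u) := by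
    rw [nproj, map_smul]
  rw [hmap, nproj_smul (inv_ne_zero h2),
    show g (g⁻¹ u) = u from g.apply_symm_apply u, nproj_circ hu]

lemma cancel' {g : V ≃ₗ[ℝ] V} (hg : PB g) {u : V} (hu : u ∈ circ) :
    nproj (g⁻¹ (nproj (g u))) = u := by
  have := cancel (g := g⁻¹) (by simpa using hg) hu
  simpa using this

variable {m : ℕ} (S : LinSchottky m)

lemma PB_g (i : Fin m) : PB (S.g i) := (S.hSO i).1

lemma gp_true (i : Fin m) : S.gp i true = S.g i := rfl
lemma gp_false (i : Fin m) : S.gp i false = (S.g i)⁻¹ := rfl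

lemma PB_gp (i : Fin m) (j : Bool) : PB (S.gp i j) := by
  cases j
  · exact PB_inv (PB_g S i)
  · exact PB_g S i

/-- Key generator lemma: `P(g_i^j)` maps `S¹ − cl(A_i^{-j})` onto `A_i^j`. -/
lemma gen_image (i : Fin m) (j : Bool) :
    (fun u => nproj (S.gp i j u)) '' (circ \ closure (arc (S.a i (!j)) (S.b i (!j)))) =
      arc (S.a i j) (S.b i j) := by
  cases j
  · -- j = false : use hPair
    have h := S.hPair i
    calc (fun u => nproj (S.gp i false u)) '' (circ \ closure (arc (S.a i true) (S.b i true)))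
        = (fun u => nproj ((S.g i)⁻¹ u)) '' ((fun u => nproj (S.g i u)) '' arc (S.a i false) (S.b i false)) := by
          rw [h]
          rfl
      _ = (fun u => nproj ((S.g i)⁻¹ (nproj (S.g i u)))) '' arc (S.a i false) (S.b i false) := by
          rw [Set.image_image]
      _ = arc (S.a i false) (S.b i false) := by
          rw [Set.image_congr (fun u hu => cancel' (PB_g S i) (arc_subset_circ _ _ hu)),
            Set.image_id']
  · -- j = true : use hPairInv
    have h := S.hPairInv i
    calc (fun u => nproj (S.gp i true u)) '' (circ \ closure (arc (S.a i false) (S.b i false)))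
        = (fun u => nproj (S.g i u)) '' ((fun u => nproj ((S.g i)⁻¹ u)) '' arc (S.a i true) (S.b i true)) := by
          rw [h]
          rfl
      _ = (fun u => nproj (S.g i (nproj ((S.g i)⁻¹ u)))) '' arc (S.a i true) (S.b i true) := by
          rw [Set.image_image]
      _ = arc (S.a i true) (S.b i true) := by
          rw [Set.image_congr (fun u hu => cancel (PB_inv (PB_g S i)) (arc_subset_circ _ _ hu)),
            Set.image_id']

/-- Product of a word. -/
def prodL (L : List (Fin m × Bool)) : V ≃ₗ[ℝ] V := (L.map fun t => S.gp t.1 t.2).prod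

lemma prodL_nil : prodL S [] = 1 := rfl

lemma prodL_cons (h : Fin m × Bool) (L : List (Fin m × Bool)) :
    prodL S (h :: L) = S.gp h.1 h.2 * prodL S L := by
  simp [prodL]

lemma PB_prodL (L : List (Fin m × Bool)) : PB (prodL S L) := by
  induction L with
  | nil => exact PB_one
  | cons h t ih => rw [prodL_cons]; exact PB_mul (PB_gp S h.1 h.2) ih

/-- A reduced word (no adjacent cancelling pair). -/
def RedW (L : List (Fin m × Bool)) : Prop :=
  ∀ (L₁ : List (Fin m × Bool)) (x : Fin m) (b : Bool) (L₂ : List (Fin m × Bool)),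
    L ≠ L₁ ++ (x, b) :: (x, !b) :: L₂

lemma RedW_tail {h : Fin m × Bool} {L : List (Fin m × Bool)} (hr : RedW (h :: L)) : RedW L := by
  intro L₁ x b L₂ hEq
  exact hr (h :: L₁) x b L₂ (by rw [hEq]; rfl)

lemma RedW_head {h₁ h₂ : Fin m × Bool} {L : List (Fin m × Bool)} (hr : RedW (h₁ :: h₂ :: L)) :
    h₂ ≠ (h₁.1, !h₁.2) := by
  intro hEq
  exact hr [] h₁.1 h₁.2 L (by rw [hEq]; simp)

lemma mem_diff_of_arc {t t' : Fin m × Bool} (hne : t ≠ t') {u : V}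
    (hu : u ∈ arc (S.a t.1 t.2) (S.b t.1 t.2)) :
    u ∈ circ \ closure (arc (S.a t'.1 t'.2) (S.b t'.1 t'.2)) := by
  refine ⟨arc_subset_circ _ _ hu, fun hc => ?_⟩
  have hd := S.hDisjCl t.1 t.2 t'.1 t'.2 (by simpa using hne)
  exact Set.disjoint_left.1 hd (subset_closure hu) hc

/-- Ping-pong lemma. -/
lemma ping : ∀ (L : List (Fin m × Bool)) (h le : Fin m × Bool),
    (h :: L).getLast (List.cons_ne_nil _ _) = le → RedW (h :: L) →
    ∀ u ∈ circ \ closure (arc (S.a le.1 (!le.2)) (S.b le.1 (!le.2))),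
      nproj ((prodL S (h :: L)) u) ∈ arc (S.a h.1 h.2) (S.b h.1 h.2) := by
  intro L
  induction L with
  | nil =>
    intro h le hlast _ u hu
    have hle : h = le := by simpa using hlast
    subst hle
    rw [prodL_cons, prodL_nil, mul_one]
    rw [← gen_image S h.1 h.2]
    exact Set.mem_image_of_mem _ hu
  | cons h₂ L' ih =>
    intro h le hlast hr u hu
    have hlast' : (h₂ :: L').getLast (List.cons_ne_nil _ _) = le := by
      rw [← hlast]; exact (List.getLast_cons _).symm
    have hucirc : u ∈ circ := hu.1
    rw [prodL_cons, nproj_comp _ (PB_prodL S (h₂ :: L')) hucirc]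
    set v := nproj ((prodL S (h₂ :: L')) u) with hv
    have hvmem : v ∈ arc (S.a h₂.1 h₂.2) (S.b h₂.1 h₂.2) :=
      ih h₂ le hlast' (RedW_tail hr) u hu
    have hne : h₂ ≠ (h.1, !h.2) := RedW_head hr
    have hvd : v ∈ circ \ closure (arc (S.a h.1 (!h.2)) (S.b h.1 (!h.2))) :=
      mem_diff_of_arc S (t := h₂) (t' := (h.1, !h.2)) hne hvmem
    rw [← gen_image S h.1 h.2]
    exact Set.mem_image_of_mem _ hvd

lemma exists_third (a b : Fin m × Bool) (hm : 2 ≤ m) : ∃ s : Fin m × Bool, s ≠ a ∧ s ≠ b := by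
  classical
  by_contra hcon
  push_neg at hcon
  have hsub : (Finset.univ : Finset (Fin m × Bool)) ⊆ {a, b} := by
    intro s _
    rcases eq_or_ne s a with h | h
    · simp [h]
    · simp [hcon s h]
  have h2 : ({a, b} : Finset (Fin m × Bool)).card ≤ 2 :=
    (Finset.card_insert_le _ _).trans (by simp)
  have h4 : Fintype.card (Fin m × Bool) ≤ 2 := by
    rw [← Finset.card_univ]
    exact le_trans (Finset.card_le_card hsub) h2
  rw [Fintype.card_prod, Fintype.card_fin, Fintype.card_bool] at h4
  omega

/-- Any nontrivial element of G moves some point of S¹ from one arc closure to another. -/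
lemma moves (γ : V ≃ₗ[ℝ] V) (hγ : γ ∈ S.G) (hne : γ ≠ 1) :
    ∃ t t' : Fin m × Bool, t ≠ t' ∧ ∃ u : V,
      u ∈ closure (arc (S.a t.1 t.2) (S.b t.1 t.2)) ∧ u ∈ circ ∧
      nproj (γ u) ∈ closure (arc (S.a t'.1 t'.2) (S.b t'.1 t'.2)) := by
  have hγ' : γ ∈ (FreeGroup.lift S.g).range := by
    rwa [FreeGroup.range_lift_eq_closure]
  obtain ⟨w, hw⟩ := hγ'
  have hwne : w ≠ 1 := by rintro rfl; exact hne (by simpa using hw.symm)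
  have hLne : w.toWord ≠ [] := fun h => hwne (FreeGroup.toWord_eq_nil_iff.1 h)
  have hred : RedW (m := m) w.toWord := by
    intro L₁ x b L₂ hEq
    have hred' : FreeGroup.reduce w.toWord = L₁ ++ (x, b) :: (x, !b) :: L₂ := by
      rw [FreeGroup.reduce_toWord]
      exact hEq
    exact FreeGroup.reduce.not hred'
  have hprod : γ = prodL S w.toWord := by
    rw [← hw]
    conv_lhs => rw [← FreeGroup.mk_toWord (x := w)]
    rw [FreeGroup.lift_mk]
    unfold prodL
    congr 1
    apply List.map_congr_left
    intro t _
    cases hb : t.2 <;> simp [LinSchottky.gp, sgen, hb]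
  obtain ⟨h, L, hHL⟩ := List.exists_cons_of_ne_nil hLne
  rw [hHL] at hred hprod
  set le := (h :: L).getLast (List.cons_ne_nil _ _) with hle
  obtain ⟨s, hs1, hs2⟩ := exists_third (le.1, !le.2) h S.hm
  refine ⟨s, h, hs2, uph ((S.a s.1 s.2 + S.b s.1 s.2) / 2), ?_, ⟨_, rfl⟩, ?_⟩
  · exact subset_closure (arc_nonempty (S.hab s.1 s.2).1)
  · rw [hprod]
    refine subset_closure (ping S L h le rfl hred _ ?_)
    exact mem_diff_of_arc S hs1 (arc_nonempty (S.hab s.1 s.2).1)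

lemma abs_le_eunorm (v : V) (i : Fin 3) : |v i| ≤ eunorm v := by
  rw [← Real.sqrt_sq_eq_abs]
  apply Real.sqrt_le_sqrt
  fin_cases i
  · show v 0 ^ 2 ≤ v 0 ^ 2 + v 1 ^ 2 + v 2 ^ 2
    nlinarith [sq_nonneg (v 1), sq_nonneg (v 2)]
  · show v 1 ^ 2 ≤ v 0 ^ 2 + v 1 ^ 2 + v 2 ^ 2
    nlinarith [sq_nonneg (v 0), sq_nonneg (v 2)]
  · show v 2 ^ 2 ≤ v 0 ^ 2 + v 1 ^ 2 + v 2 ^ 2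
    nlinarith [sq_nonneg (v 0), sq_nonneg (v 1)]

lemma eunorm_le_sum (v : V) : eunorm v ≤ |v 0| + |v 1| + |v 2| := by
  rw [eunorm, show v 0 ^ 2 + v 1 ^ 2 + v 2 ^ 2 = |v 0| ^ 2 + |v 1| ^ 2 + |v 2| ^ 2 by
    simp [sq_abs]]
  have h := Real.sqrt_le_sqrt (show |v 0| ^ 2 + |v 1| ^ 2 + |v 2| ^ 2 ≤ (|v 0| + |v 1| + |v 2|) ^ 2 by
    nlinarith [abs_nonneg (v 0), abs_nonneg (v 1), abs_nonneg (v 2)])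
  rwa [Real.sqrt_sq (by positivity)] at h

lemma dist_le_rho (x y : V) : dist x y ≤ ρ x y := by
  rw [dist_pi_le_iff (by rw [ρ, eunorm]; positivity)]
  intro i
  rw [Real.dist_eq]
  have : x i - y i = (x - y) i := rfl
  rw [this]
  exact abs_le_eunorm _ i

lemma compact_closure_arc (a b : ℝ) : IsCompact (closure (arc a b)) := by
  have hsub : arc a b ⊆ Metric.closedBall (0 : V) 1 := by
    rintro u ⟨φ, _, _, rfl⟩
    rw [Metric.mem_closedBall, dist_pi_le_iff zero_le_one]
    intro i
    have h0 : (0 : V) i = 0 := rfl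
    rw [Real.dist_eq, h0, sub_zero]
    exact circ_abs_le ⟨φ, rfl⟩ i
  exact (isCompact_closedBall _ _).of_isClosed_subset isClosed_closure
    (closure_minimal hsub Metric.isClosed_closedBall)

/-- Uniform separation of the arc closures. -/
lemma sep : ∃ δ : ℝ, 0 < δ ∧ ∀ t t' : Fin m × Bool, t ≠ t' →
    ∀ x ∈ closure (arc (S.a t.1 t.2) (S.b t.1 t.2)),
    ∀ y ∈ closure (arc (S.a t'.1 t'.2) (S.b t'.1 t'.2)), δ ≤ ρ x y := by
  have key : ∀ p : (Fin m × Bool) × (Fin m × Bool), ∃ δ : ℝ, 0 < δ ∧ (p.1 ≠ p.2 →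
      ∀ x ∈ closure (arc (S.a p.1.1 p.1.2) (S.b p.1.1 p.1.2)),
      ∀ y ∈ closure (arc (S.a p.2.1 p.2.2) (S.b p.2.1 p.2.2)), δ ≤ ρ x y) := by
    rintro ⟨t, t'⟩
    rcases eq_or_ne t t' with h | h
    · exact ⟨1, one_pos, fun hc => absurd h hc⟩
    · have hd : Disjoint (closure (arc (S.a t.1 t.2) (S.b t.1 t.2)))
          (closure (arc (S.a t'.1 t'.2) (S.b t'.1 t'.2))) :=
        S.hDisjCl t.1 t.2 t'.1 t'.2 (by simpa using h)
      obtain ⟨δ, hδ, hdisj⟩ := hd.exists_thickenings (compact_closure_arc _ _) isClosed_closure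
      refine ⟨δ, hδ, fun _ x hx y hy => ?_⟩
      by_contra hlt
      push_neg at hlt
      have hdxy : dist x y < δ := lt_of_le_of_lt (dist_le_rho x y) hlt
      have hx1 : x ∈ Metric.thickening δ (closure (arc (S.a t.1 t.2) (S.b t.1 t.2))) :=
        Metric.self_subset_thickening hδ _ hx
      have hx2 : x ∈ Metric.thickening δ (closure (arc (S.a t'.1 t'.2) (S.b t'.1 t'.2))) :=
        Metric.mem_thickening_iff.2 ⟨y, hy, hdxy⟩
      exact Set.disjoint_left.1 hdisj hx1 hx2
  choose f hf1 hf2 using key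
  have hne : (Finset.univ : Finset ((Fin m × Bool) × (Fin m × Bool))).Nonempty := by
    have hm := S.hm
    exact ⟨((⟨0, by omega⟩, true), (⟨0, by omega⟩, true)), Finset.mem_univ _⟩
  refine ⟨Finset.univ.inf' hne f, ?_, ?_⟩
  · rw [Finset.lt_inf'_iff]
    intro p _
    exact hf1 p
  · intro t t' h x hx y hy
    exact le_trans (Finset.inf'_le f (Finset.mem_univ (t, t'))) (hf2 (t, t') h x hx y hy)

end Stmt9Aux


/-- the Schottky group `G` is a discrete subgroup of SO⁰(2,1): there is a
neighborhood of the identity meeting `G` only in `{1}` (identifying linear maps with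
their matrices). -/
theorem stmt9 {m : ℕ} (S : LinSchottky m) :
    ∃ U : Set (Matrix (Fin 3) (Fin 3) ℝ), IsOpen U ∧ (1 : Matrix (Fin 3) (Fin 3) ℝ) ∈ U ∧
      ∀ γ : V ≃ₗ[ℝ] V, γ ∈ S.G → LinearMap.toMatrix' γ.toLinearMap ∈ U → γ = 1 := by
  classical
  obtain ⟨δ, hδ, hsep⟩ := Stmt9Aux.sep S
  set η : ℝ := min (δ / 37) 6⁻¹ with hηdef
  have hηpos : 0 < η := lt_min (by linarith) (by norm_num)
  have hη6 : η ≤ 6⁻¹ := min_le_right _ _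
  have hηδ : η ≤ δ / 37 := min_le_left _ _
  refine ⟨{M | ∀ i j : Fin 3, |M i j - (1 : Matrix (Fin 3) (Fin 3) ℝ) i j| < η}, ?_, ?_, ?_⟩
  · have hset : {M : Matrix (Fin 3) (Fin 3) ℝ |
        ∀ i j : Fin 3, |M i j - (1 : Matrix (Fin 3) (Fin 3) ℝ) i j| < η} =
        ⋂ i, ⋂ j, (fun M : Matrix (Fin 3) (Fin 3) ℝ => M i j) ⁻¹'
          (Metric.ball ((1 : Matrix (Fin 3) (Fin 3) ℝ) i j) η) := by
      ext M
      simp [Metric.mem_ball, Real.dist_eq]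
    rw [hset]
    exact isOpen_iInter_of_finite fun i => isOpen_iInter_of_finite fun j =>
      Metric.isOpen_ball.preimage ((continuous_apply j).comp (continuous_apply i))
  · intro i j
    simpa using hηpos
  · intro γ hγ hM
    by_contra hne
    obtain ⟨t, t', htt, u, hu_cl, hu_circ, hγu⟩ := Stmt9Aux.moves S γ hγ hne
    have hmain : δ ≤ ρ u (nproj (γ u)) := hsep t t' htt u hu_cl _ hγu
    set M := LinearMap.toMatrix' γ.toLinearMap with hMdef
    have hγu_eq : γ u = M.mulVec u := by
      rw [hMdef, ← Matrix.toLin'_apply, Matrix.toLin'_toMatrix']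
      rfl
    set w := γ u with hwdef
    have hu_abs : ∀ i : Fin 3, |u i| ≤ 1 := Stmt9Aux.circ_abs_le hu_circ
    have habc : ∀ a b c x y z : ℝ, |x| ≤ 1 → |y| ≤ 1 → |z| ≤ 1 →
        |a| ≤ η → |b| ≤ η → |c| ≤ η → |a * x + b * y + c * z| ≤ 3 * η := by
      intro a b c x y z hx hy hz ha hb hc
      have h1 : |a * x + b * y + c * z| ≤ |a * x| + |b * y| + |c * z| :=
        (abs_add_le _ _).trans (by linarith [abs_add_le (a * x) (b * y)])
      rw [abs_mul, abs_mul, abs_mul] at h1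
      nlinarith [abs_nonneg a, abs_nonneg b, abs_nonneg c, abs_nonneg x, abs_nonneg y,
        abs_nonneg z, mul_le_mul ha hx (abs_nonneg x) hηpos.le,
        mul_le_mul hb hy (abs_nonneg y) hηpos.le, mul_le_mul hc hz (abs_nonneg z) hηpos.le]
    have herr : ∀ i : Fin 3, |w i - u i| ≤ 3 * η := by
      intro i
      have hwi : w i = M i 0 * u 0 + M i 1 * u 1 + M i 2 * u 2 := by
        rw [hγu_eq]
        simp [Matrix.mulVec, dotProduct, Fin.sum_univ_three]
      have h1 : u i = (1 : Matrix (Fin 3) (Fin 3) ℝ) i 0 * u 0 +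
          (1 : Matrix (Fin 3) (Fin 3) ℝ) i 1 * u 1 +
          (1 : Matrix (Fin 3) (Fin 3) ℝ) i 2 * u 2 := by
        conv_lhs => rw [← Matrix.one_mulVec u]
        simp [Matrix.mulVec, dotProduct, Fin.sum_univ_three]
      have he : w i - u i = (M i 0 - (1 : Matrix (Fin 3) (Fin 3) ℝ) i 0) * u 0 +
          (M i 1 - (1 : Matrix (Fin 3) (Fin 3) ℝ) i 1) * u 1 +
          (M i 2 - (1 : Matrix (Fin 3) (Fin 3) ℝ) i 2) * u 2 := by
        rw [hwi]
        conv_lhs => rw [h1]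
        ring
      rw [he]
      exact habc _ _ _ _ _ _ (hu_abs 0) (hu_abs 1) (hu_abs 2)
        (hM i 0).le (hM i 1).le (hM i 2).le
    have hu2 : u 2 = 1 := Stmt9Aux.circ_two hu_circ
    have hc1 : |w 2 - 1| ≤ 3 * η := by
      have := herr 2
      rwa [hu2] at this
    have hη16 : η ≤ 1 / 6 := by
      rw [show (1 : ℝ) / 6 = 6⁻¹ by norm_num]
      exact hη6
    have hw2 : (1 : ℝ) / 2 ≤ w 2 := by
      have := (abs_le.1 hc1).1
      linarith
    have hw2pos : (0 : ℝ) < w 2 := by linarith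
    have hcoord : ∀ i : Fin 3, |u i - nproj w i| ≤ 12 * η := by
      intro i
      have hnp : nproj w i = (w 2)⁻¹ * w i := rfl
      have heq : u i - nproj w i = (w 2)⁻¹ * (w 2 * u i - w i) := by
        rw [hnp]
        field_simp
      rw [heq, abs_mul, abs_of_pos (inv_pos.2 hw2pos)]
      have h2 : |w 2 * u i - w i| ≤ 6 * η := by
        have ha : w 2 * u i - w i = (w 2 - 1) * u i - (w i - u i) := by ring
        rw [ha]
        calc |(w 2 - 1) * u i - (w i - u i)| ≤ |(w 2 - 1) * u i| + |w i - u i| :=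
              abs_sub _ _
          _ = |w 2 - 1| * |u i| + |w i - u i| := by rw [abs_mul]
          _ ≤ 3 * η * 1 + 3 * η := by
              have := mul_le_mul hc1 (hu_abs i) (abs_nonneg _) (by positivity)
              linarith [herr i]
          _ = 6 * η := by ring
      have hinv : (w 2)⁻¹ ≤ 2 := by
        rw [inv_le_comm₀ ‹(0:ℝ) < w 2› (by norm_num)]
        linarith
      calc (w 2)⁻¹ * |w 2 * u i - w i| ≤ 2 * (6 * η) := by
            apply mul_le_mul hinv h2 (abs_nonneg _) (by norm_num)
        _ = 12 * η := by ring
    have hρ : ρ u (nproj w) ≤ 36 * η := by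
      have h1 : ρ u (nproj w) ≤ |(u - nproj w) 0| + |(u - nproj w) 1| + |(u - nproj w) 2| :=
        Stmt9Aux.eunorm_le_sum _
      have h2 : ∀ i : Fin 3, |(u - nproj w) i| ≤ 12 * η := fun i => hcoord i
      linarith [h2 0, h2 1, h2 2]
    have : ρ u (nproj w) < δ := by
      calc ρ u (nproj w) ≤ 36 * η := hρ
        _ ≤ 36 * (δ / 37) := by linarith
        _ < δ := by linarith
    linarith
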